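/- arXiv:2504.09411 — 2 statements merged into one kernel-verified Lean document; each statement's English description precedes it below -/
import Mathlib

section
/- Let d ≥ 1 be an integer and let f be a dimension function with k ⪯ f ⪯ (k+1) for some integer 0 ≤ k ≤ d−1. Then there exist constants c₁, c₂ > 0 depending only on d such that for every axis-parallel rectangle R ⊂ ℝ^d with side lengths a₁ ≥ a₂ ≥ ⋯ ≥ a_d > 0, c₁·a₁⋯a_k·a_{k+1}^{−k}·f(a_{k+1}) ≤ H^f_∞(R) ≤ c₂·a₁⋯a_k·a_{k+1}^{−k}·f(a_{k+1}). -/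
open MeasureTheory Metric Set Filter
open scoped ENNReal NNReal Topology BigOperators

noncomputable section

/-- Distance from a real number to the nearest integer: `‖t‖`. -/
def distInt (t : ℝ) : ℝ := |t - round t|

/-- The sup norm `|q| = max_i |q_i|` of an integer vector, as a natural number. -/
def qnorm {n : ℕ} (q : Fin n → ℤ) : ℕ := Finset.univ.sup fun i => (q i).natAbs

/-- The unit cube `[0,1]^{nm}` inside `ℝ^{nm} = (ℝ^n)^m`. -/
def unitCube (n m : ℕ) : Set (EuclideanSpace ℝ (Fin m × Fin n)) :=
  {x | ∀ p, x p ∈ Set.Icc (0:ℝ) 1}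

/-- The weighted simultaneous approximation limsup set `W(n,m;Ψ)`. -/
def Wset (n m : ℕ) (Ψ : Fin m → (Fin n → ℤ) → ℝ) :
    Set (EuclideanSpace ℝ (Fin m × Fin n)) :=
  {x | (∀ p, x p ∈ Set.Icc (0:ℝ) 1) ∧
    {q : Fin n → ℤ | ∀ j, distInt (∑ i, (q i : ℝ) * x (j, i)) < Ψ j q}.Infinite}

/-- The multiplicative approximation limsup set `M^×(n,m;ψ)`. -/
def Mset (n m : ℕ) (ψ : (Fin n → ℤ) → ℝ) :
    Set (EuclideanSpace ℝ (Fin m × Fin n)) :=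
  {x | (∀ p, x p ∈ Set.Icc (0:ℝ) 1) ∧
    {q : Fin n → ℤ | (∏ j : Fin m, distInt (∑ i, (q i : ℝ) * x (j, i))) < ψ q}.Infinite}

/-- The Hausdorff measure associated with a dimension function `f`. -/
def hMeasure (f : ℝ → ℝ) {X : Type*} [EMetricSpace X] [MeasurableSpace X] [BorelSpace X] :
    Measure X :=
  Measure.mkMetric fun r => ENNReal.ofReal (f r.toReal)

/-- A dimension function: continuous, non-decreasing, vanishing at `0`, nonnegative on `[0,∞)`. -/
def IsDimFun (f : ℝ → ℝ) : Prop :=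
  ContinuousOn f (Set.Ici 0) ∧ MonotoneOn f (Set.Ici 0) ∧ f 0 = 0 ∧ ∀ x, 0 ≤ x → 0 ≤ f x

/-- `f ⪯ s` : `f(y)/y^s ≤ f(x)/x^s` for `0 < x < y`. -/
def DimLe (f : ℝ → ℝ) (s : ℝ) : Prop :=
  ∀ x y : ℝ, 0 < x → x < y → f y / y ^ s ≤ f x / x ^ s

/-- `f ≺ s` : `f ⪯ s` and `f(r)/r^s → ∞` as `r → 0⁺`. -/
def DimLt (f : ℝ → ℝ) (s : ℝ) : Prop :=
  DimLe f s ∧ Tendsto (fun r : ℝ => f r / r ^ s) (nhdsWithin 0 (Set.Ioi 0)) atTop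

/-- `s ⪯ f` : `f(x)/x^s ≤ f(y)/y^s` for `0 < x < y`. -/
def LeDim (s : ℝ) (f : ℝ → ℝ) : Prop :=
  ∀ x y : ℝ, 0 < x → x < y → f x / x ^ s ≤ f y / y ^ s

/-- `s ≺ f` : `s ⪯ f` and `f(r)/r^s → 0` as `r → 0⁺`. -/
def LtDim (s : ℝ) (f : ℝ → ℝ) : Prop :=
  LeDim s f ∧ Tendsto (fun r : ℝ => f r / r ^ s) (nhdsWithin 0 (Set.Ioi 0)) (nhds 0)

/-- The quantity `t_q(Ψ,f)`. -/
def tq (n m : ℕ) (Ψ : Fin m → (Fin n → ℤ) → ℝ) (f : ℝ → ℝ) (q : Fin n → ℤ) : ℝ :=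
  ⨅ i : Fin m, f (Ψ i q / (qnorm q : ℝ)) * (Ψ i q / (qnorm q : ℝ)) ^ ((1 - (n : ℝ)) * m) *
    ∏ j ∈ Finset.univ.filter (fun j => Ψ i q < Ψ j q), Ψ j q / Ψ i q

/-- The Fourier transform of a measure on `ℝ^ι`. -/
def muFT {ι : Type*} [Fintype ι] (μ : Measure (EuclideanSpace ℝ ι))
    (x : EuclideanSpace ℝ ι) : ℂ :=
  ∫ ξ, Complex.exp (((-2 * Real.pi * (inner ℝ ξ x : ℝ) : ℝ) : ℂ) * Complex.I) ∂μ

/-- The Fourier dimension of a subset of `ℝ^ι`. -/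
def fdim {ι : Type*} [Fintype ι] (E : Set (EuclideanSpace ℝ ι)) : ℝ :=
  sSup {s : ℝ | 0 ≤ s ∧ s ≤ Fintype.card ι ∧
    ∃ μ : Measure (EuclideanSpace ℝ ι), IsProbabilityMeasure μ ∧
      (∃ K : Set (EuclideanSpace ℝ ι), IsCompact K ∧ K ⊆ E ∧ μ Kᶜ = 0) ∧
      ∃ C : ℝ, ∀ x : EuclideanSpace ℝ ι, x ≠ 0 →
        ‖muFT μ x‖ ≤ C * ‖x‖ ^ (-(s / 2))}

/-- The open rectangle-type set `R(q,δ)`. -/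
def Rset (n m : ℕ) (q : Fin n → ℤ) (δ : Fin m → ℝ) :
    Set (EuclideanSpace ℝ (Fin m × Fin n)) :=
  {x | (∀ p, x p ∈ Set.Icc (0:ℝ) 1) ∧ ∀ j, distInt (∑ i, (q i : ℝ) * x (j, i)) < δ j}

/-- The closed rectangle-type set `R̄(q,δ)`. -/
def RsetC (n m : ℕ) (q : Fin n → ℤ) (δ : Fin m → ℝ) :
    Set (EuclideanSpace ℝ (Fin m × Fin n)) :=
  {x | (∀ p, x p ∈ Set.Icc (0:ℝ) 1) ∧ ∀ j, distInt (∑ i, (q i : ℝ) * x (j, i)) ≤ δ j}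

/-- gcd of the coordinates of an integer vector. -/
def intGcd {n : ℕ} (q : Fin n → ℤ) : ℤ := Finset.univ.gcd q

/-- The set `R'(q,δ)` (coprimality restricted rectangles). -/
def Rset' (n m : ℕ) (q : Fin n → ℤ) (δ : Fin m → ℝ) :
    Set (EuclideanSpace ℝ (Fin m × Fin n)) :=
  {x | (∀ p, x p ∈ Set.Icc (0:ℝ) 1) ∧ ∃ p : Fin m → ℤ,
    ∀ j, Int.gcd (intGcd q) (p j) = 1 ∧ |(∑ i, (q i : ℝ) * x (j, i)) - (p j : ℝ)| < δ j}

/-- The multiplicative neighbourhood `M(q,δ)`. -/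
def MsetDelta (n m : ℕ) (q : Fin n → ℤ) (δ : ℝ) :
    Set (EuclideanSpace ℝ (Fin m × Fin n)) :=
  {x | (∀ p, x p ∈ Set.Icc (0:ℝ) 1) ∧
    (∏ j : Fin m, distInt (∑ i, (q i : ℝ) * x (j, i))) < δ}

/-- The coprime multiplicative neighbourhood `M'(q,δ)`. -/
def Mset' (n m : ℕ) (q : Fin n → ℤ) (δ : ℝ) :
    Set (EuclideanSpace ℝ (Fin m × Fin n)) :=
  {x | (∀ p, x p ∈ Set.Icc (0:ℝ) 1) ∧ ∃ p : Fin m → ℤ,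
    (∀ j, Int.gcd (intGcd q) (p j) = 1) ∧
    (∏ j : Fin m, |(∑ i, (q i : ℝ) * x (j, i)) - (p j : ℝ)|) < δ}

/-- The index set `A_m(δ)`, parametrized by `N = N(δ)`. -/
def Aset (m N : ℕ) : Set (Fin m → ℤ) :=
  {k | (∀ j, 0 ≤ k j) ∧ (∑ j, k j) = (N : ℤ) - m}

/-- Hausdorff `f`-content: infimum of `Σ f(diam B_i)` over countable covers by balls. -/
def hContent (f : ℝ → ℝ) {X : Type*} [PseudoMetricSpace X] (E : Set X) : ℝ≥0∞ :=
  ⨅ (c : ℕ → X) (r : ℕ → ℝ) (_ : E ⊆ ⋃ i, Metric.ball (c i) (r i)),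
    ∑' i, ENNReal.ofReal (f (2 * r i))

/-- Lower density of a set of positive integers. -/
def lowerDensity (Λ : Set ℕ) : ℝ :=
  Filter.liminf (fun Q : ℕ => (({i | i ∈ Λ ∧ 1 ≤ i ∧ i ≤ Q}.ncard : ℝ)) / Q) Filter.atTop


lemma myVolumeBox (d : ℕ) (l u : Fin d → ℝ) :
    volume {x : EuclideanSpace ℝ (Fin d) | ∀ i, x i ∈ Set.Icc (l i) (u i)} =
      ∏ i, ENNReal.ofReal (u i - l i) := by
  have hmp := EuclideanSpace.volume_preserving_symm_measurableEquiv_toLp (Fin d)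
  have hset : {x : EuclideanSpace ℝ (Fin d) | ∀ i, x i ∈ Set.Icc (l i) (u i)} =
      (MeasurableEquiv.toLp 2 (Fin d → ℝ)).symm ⁻¹' (Set.univ.pi fun i => Set.Icc (l i) (u i)) := by
    ext x
    simp only [Set.mem_preimage, Set.mem_pi, Set.mem_univ,
      forall_true_left, Set.mem_setOf_eq, MeasurableEquiv.coe_mk, Equiv.coe_fn_mk]
    rfl
  rw [hset, hmp.measure_preimage
      ((MeasurableSet.univ_pi fun i => measurableSet_Icc).nullMeasurableSet)]
  rw [volume_pi_pi]
  simp [Real.volume_Icc]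

lemma myCoordLeDist (d : ℕ) (x y : EuclideanSpace ℝ (Fin d)) (i : Fin d) :
    |x i - y i| ≤ dist x y := by
  rw [EuclideanSpace.dist_eq]
  rw [← Real.sqrt_sq_eq_abs]
  apply Real.sqrt_le_sqrt
  have := Finset.single_le_sum (f := fun j => dist (x j) (y j) ^ 2)
    (fun j _ => sq_nonneg _) (Finset.mem_univ i)
  simpa [Real.dist_eq] using this

lemma myFilterCard (d k : ℕ) (hkd : k ≤ d) :
    (Finset.univ.filter fun i : Fin d => (i : ℕ) < k).card = k := by
  have : (Finset.univ.filter fun i : Fin d => (i : ℕ) < k)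
      = Finset.map (Fin.castLEEmb hkd) Finset.univ := by
    ext i
    simp only [Finset.mem_filter, Finset.mem_univ, true_and, Finset.mem_map]
    constructor
    · intro h
      refine ⟨⟨(i : ℕ), h⟩, ?_⟩
      ext; simp
    · rintro ⟨j, rfl⟩; simpa using j.2
  rw [this]; simp

set_option maxHeartbeats 1000000 in
/-- Hausdorff `f`-content of a rectangle (Proposition 2.3): for an axis-parallel rectangle
with side lengths `a₁ ≥ a₂ ≥ ⋯ ≥ a_d > 0` (placed along the coordinates according to an
arbitrary permutation `σ`), the `f`-content is comparable to
`a₁⋯a_k · a_{k+1}^{-k} · f(a_{k+1})`, with constants depending only on `d`. -/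
theorem stmt10 (d : ℕ) (hd : 1 ≤ d) :
    ∃ c₁ c₂ : ℝ, 0 < c₁ ∧ 0 < c₂ ∧
      ∀ (f : ℝ → ℝ), IsDimFun f →
      ∀ (k : ℕ) (hk : k < d), LeDim (k : ℝ) f → DimLe f ((k : ℝ) + 1) →
      ∀ (b a : Fin d → ℝ) (σ : Equiv.Perm (Fin d)),
        (∀ i, 0 < a i) → (∀ i j : Fin d, i ≤ j → a j ≤ a i) →
        ENNReal.ofReal (c₁ * ((∏ i ∈ Finset.univ.filter (fun i : Fin d => (i : ℕ) < k), a i) *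
            (a ⟨k, hk⟩) ^ (-(k : ℝ)) * f (a ⟨k, hk⟩)))
          ≤ hContent f {x : EuclideanSpace ℝ (Fin d) |
              ∀ i, x i ∈ Set.Icc (b i) (b i + a (σ i))} ∧
        hContent f {x : EuclideanSpace ℝ (Fin d) |
              ∀ i, x i ∈ Set.Icc (b i) (b i + a (σ i))}
          ≤ ENNReal.ofReal (c₂ * ((∏ i ∈ Finset.univ.filter (fun i : Fin d => (i : ℕ) < k), a i) *
            (a ⟨k, hk⟩) ^ (-(k : ℝ)) * f (a ⟨k, hk⟩))) := by
  have hsd : (1:ℝ) ≤ Real.sqrt d := by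
    rw [show (1:ℝ) = Real.sqrt 1 by simp]
    exact Real.sqrt_le_sqrt (by exact_mod_cast hd)
  refine ⟨1, 2^d * (4 * Real.sqrt d)^d, one_pos, by positivity, ?_⟩
  intro f hf k hk hle hge b a σ hapos hasort
  set a' : ℝ := a ⟨k, hk⟩ with ha'def
  have ha' : 0 < a' := hapos _
  have hf0 : f 0 = 0 := hf.2.2.1
  have hfnn : ∀ x, 0 ≤ x → 0 ≤ f x := hf.2.2.2
  set Fk : Finset (Fin d) := Finset.univ.filter (fun i : Fin d => (i : ℕ) < k) with hFk
  set Pk : ℝ := ∏ i ∈ Fk, a i with hPk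
  set Ps : ℝ := ∏ i ∈ Finset.univ.filter (fun i : Fin d => ¬ (i : ℕ) < k), a i with hPs
  have hPkpos : 0 < Pk := Finset.prod_pos fun i _ => hapos i
  have hPspos : 0 < Ps := Finset.prod_pos fun i _ => hapos i
  have hsplit : Pk * Ps = ∏ i, a i := Finset.prod_filter_mul_prod_filter_not _ _ _
  have hrpow : a' ^ (-(k:ℝ)) = (a' ^ k)⁻¹ := by
    rw [Real.rpow_neg ha'.le, Real.rpow_natCast]
  set E : Set (EuclideanSpace ℝ (Fin d)) :=
    {x | ∀ i, x i ∈ Set.Icc (b i) (b i + a (σ i))} with hE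
  -- the key pointwise inequality
  have claimL : ∀ ρ : ℝ, 0 < ρ →
      (∏ i, min ρ (a i)) * f a' ≤ f ρ * (a' ^ k * Ps) := by
    intro ρ hρ
    have hminnn : ∀ i : Fin d, 0 ≤ min ρ (a i) := fun i => le_min hρ.le (hapos i).le
    rcases le_or_gt a' ρ with hcase | hcase
    · have h1 : ∏ i, min ρ (a i) ≤ ρ ^ k * Ps := by
        rw [← Finset.prod_filter_mul_prod_filter_not Finset.univ
          (fun i : Fin d => (i : ℕ) < k) (fun i => min ρ (a i))]
        have e1 : ∏ i ∈ Fk, min ρ (a i) ≤ ρ ^ k := by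
          calc ∏ i ∈ Fk, min ρ (a i) ≤ ∏ _i ∈ Fk, ρ :=
                Finset.prod_le_prod (fun i _ => hminnn i) (fun i _ => min_le_left _ _)
            _ = ρ ^ k := by rw [Finset.prod_const, hFk, myFilterCard d k hk.le]
        have e2 : ∏ i ∈ Finset.univ.filter (fun i : Fin d => ¬ (i : ℕ) < k), min ρ (a i) ≤ Ps :=
          Finset.prod_le_prod (fun i _ => hminnn i) (fun i _ => min_le_right _ _)
        exact mul_le_mul e1 e2 (Finset.prod_nonneg fun i _ => hminnn i) (pow_nonneg hρ.le k)
      have h2 : f a' * ρ ^ k ≤ f ρ * a' ^ k := by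
        rcases eq_or_lt_of_le hcase with h | h
        · rw [h]
        · have h3 := hle a' ρ ha' h
          rw [Real.rpow_natCast, Real.rpow_natCast] at h3
          rw [div_le_div_iff₀ (pow_pos ha' k) (pow_pos hρ k)] at h3
          exact h3
      calc (∏ i, min ρ (a i)) * f a' ≤ (ρ ^ k * Ps) * f a' :=
            mul_le_mul_of_nonneg_right h1 (hfnn _ ha'.le)
        _ = (f a' * ρ ^ k) * Ps := by ring
        _ ≤ (f ρ * a' ^ k) * Ps := mul_le_mul_of_nonneg_right h2 hPspos.le
        _ = f ρ * (a' ^ k * Ps) := by ring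
    · have hmem : (⟨k, hk⟩ : Fin d) ∈ Finset.univ.filter (fun i : Fin d => ¬ (i : ℕ) < k) := by
        simp
      set Q : ℝ := ∏ i ∈ (Finset.univ.filter (fun i : Fin d => ¬ (i : ℕ) < k)).erase ⟨k, hk⟩, a i
        with hQ
      have hQnn : 0 ≤ Q := Finset.prod_nonneg fun i _ => (hapos i).le
      have hPs' : Ps = a' * Q := by
        rw [hPs, hQ, ← Finset.mul_prod_erase _ a hmem]
      have h1 : ∏ i, min ρ (a i) ≤ ρ ^ k * (ρ * Q) := by
        rw [← Finset.prod_filter_mul_prod_filter_not Finset.univ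
          (fun i : Fin d => (i : ℕ) < k) (fun i => min ρ (a i))]
        have e1 : ∏ i ∈ Fk, min ρ (a i) ≤ ρ ^ k := by
          calc ∏ i ∈ Fk, min ρ (a i) ≤ ∏ _i ∈ Fk, ρ :=
                Finset.prod_le_prod (fun i _ => hminnn i) (fun i _ => min_le_left _ _)
            _ = ρ ^ k := by rw [Finset.prod_const, hFk, myFilterCard d k hk.le]
        have e2 : ∏ i ∈ Finset.univ.filter (fun i : Fin d => ¬ (i : ℕ) < k), min ρ (a i)
            ≤ ρ * Q := by
          rw [← Finset.mul_prod_erase _ (fun i => min ρ (a i)) hmem]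
          have hmm : min ρ (a ⟨k, hk⟩) = ρ := min_eq_left hcase.le
          rw [hmm]
          exact mul_le_mul_of_nonneg_left
            (Finset.prod_le_prod (fun i _ => hminnn i) (fun i _ => min_le_right _ _)) hρ.le
        exact mul_le_mul e1 e2 (Finset.prod_nonneg fun i _ => hminnn i) (pow_nonneg hρ.le k)
      have h2 : f a' * ρ ^ (k + 1) ≤ f ρ * a' ^ (k + 1) := by
        have h3 := hge ρ a' hρ hcase
        have hcast : ((k : ℝ) + 1) = ((k + 1 : ℕ) : ℝ) := by push_cast; ring
        rw [hcast, Real.rpow_natCast, Real.rpow_natCast] at h3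
        rw [div_le_div_iff₀ (pow_pos ha' (k+1)) (pow_pos hρ (k+1))] at h3
        exact h3
      calc (∏ i, min ρ (a i)) * f a' ≤ (ρ ^ k * (ρ * Q)) * f a' :=
            mul_le_mul_of_nonneg_right h1 (hfnn _ ha'.le)
        _ = (f a' * ρ ^ (k + 1)) * Q := by ring
        _ ≤ (f ρ * a' ^ (k + 1)) * Q := mul_le_mul_of_nonneg_right h2 hQnn
        _ = f ρ * (a' ^ k * (a' * Q)) := by ring
        _ = f ρ * (a' ^ k * Ps) := by rw [← hPs']
  constructor
  · -- lower bound
    have hC : 0 < a' ^ k * Ps := by positivity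
    set C : ℝ := f a' / (a' ^ k * Ps) with hCdef
    have hC0 : 0 ≤ C := div_nonneg (hfnn _ ha'.le) hC.le
    -- per-ball estimate
    have key : ∀ (cc : EuclideanSpace ℝ (Fin d)) (r : ℝ),
        ENNReal.ofReal C * volume (E ∩ Metric.ball cc r) ≤ ENNReal.ofReal (f (2 * r)) := by
      intro cc r
      rcases le_or_gt r 0 with hr | hr
      · rw [Metric.ball_eq_empty.2 hr]
        simp
      · set ρ : ℝ := 2 * r with hρdef
        have hρ : 0 < ρ := by positivity
        have hsub : E ∩ Metric.ball cc r ⊆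
            {x : EuclideanSpace ℝ (Fin d) | ∀ i,
              x i ∈ Set.Icc (max (b i) (cc i - r)) (max (b i) (cc i - r) + min ρ (a (σ i)))} := by
          rintro x ⟨hxE, hxB⟩ i
          have hco : |x i - cc i| ≤ r :=
            (myCoordLeDist d x cc i).trans (le_of_lt (Metric.mem_ball.1 hxB))
          rw [abs_le] at hco
          have h1 := (hxE i).1
          have h2 := (hxE i).2
          constructor
          · exact max_le h1 (by linarith [hco.1])
          · rcases le_total ρ (a (σ i)) with hmin | hmin
            · rw [min_eq_left hmin]
              have : cc i - r ≤ max (b i) (cc i - r) := le_max_right _ _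
              have : x i ≤ cc i + r := by linarith [hco.2]
              calc x i ≤ cc i + r := this
                _ = (cc i - r) + ρ := by rw [hρdef]; ring
                _ ≤ max (b i) (cc i - r) + ρ := add_le_add_left (le_max_right _ _) _
            · rw [min_eq_right hmin]
              calc x i ≤ b i + a (σ i) := h2
                _ ≤ max (b i) (cc i - r) + a (σ i) := add_le_add_left (le_max_left _ _) _
        have hvol : volume (E ∩ Metric.ball cc r) ≤ ENNReal.ofReal (∏ i, min ρ (a i)) := by
          calc volume (E ∩ Metric.ball cc r) ≤ volume {x : EuclideanSpace ℝ (Fin d) | ∀ i,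
                x i ∈ Set.Icc (max (b i) (cc i - r)) (max (b i) (cc i - r) + min ρ (a (σ i)))} :=
              measure_mono hsub
            _ = ∏ i, ENNReal.ofReal (min ρ (a (σ i))) := by
              rw [myVolumeBox]
              congr 1; funext i; congr 1; ring
            _ = ∏ i, ENNReal.ofReal (min ρ (a i)) := Fintype.prod_equiv σ _ _ (fun i => rfl)
            _ = ENNReal.ofReal (∏ i, min ρ (a i)) := by
              rw [← ENNReal.ofReal_prod_of_nonneg (fun i _ => le_min hρ.le (hapos i).le)]
        calc ENNReal.ofReal C * volume (E ∩ Metric.ball cc r)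
            ≤ ENNReal.ofReal C * ENNReal.ofReal (∏ i, min ρ (a i)) := by gcongr
          _ = ENNReal.ofReal (C * ∏ i, min ρ (a i)) := by
              rw [← ENNReal.ofReal_mul hC0]
          _ ≤ ENNReal.ofReal (f ρ) := by
              apply ENNReal.ofReal_le_ofReal
              rw [hCdef, div_mul_eq_mul_div, div_le_iff₀ hC]
              calc f a' * ∏ i, min ρ (a i) = (∏ i, min ρ (a i)) * f a' := by ring
                _ ≤ f ρ * (a' ^ k * Ps) := claimL ρ hρ
    -- sum over the cover
    have hvolE : volume E = ENNReal.ofReal (∏ i, a i) := by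
      rw [hE, myVolumeBox]
      calc ∏ i, ENNReal.ofReal (b i + a (σ i) - b i)
          = ∏ i, ENNReal.ofReal (a (σ i)) := by
            apply Finset.prod_congr rfl; intro i _; congr 1; ring
        _ = ∏ i, ENNReal.ofReal (a i) := Fintype.prod_equiv σ _ _ (fun i => rfl)
        _ = ENNReal.ofReal (∏ i, a i) :=
            (ENNReal.ofReal_prod_of_nonneg (fun i _ => (hapos i).le)).symm
    have hEq : 1 * (Pk * a' ^ (-(k : ℝ)) * f a') = C * ∏ i, a i := by
      rw [hrpow, ← hsplit, hCdef]
      have h1 : (a' : ℝ) ^ k ≠ 0 := (pow_pos ha' k).ne'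
      have h2 : Ps ≠ 0 := hPspos.ne'
      field_simp
    unfold hContent
    refine le_iInf fun cc => le_iInf fun rr => le_iInf fun hcov => ?_
    calc ENNReal.ofReal (1 * (Pk * a' ^ (-(k : ℝ)) * f a'))
        = ENNReal.ofReal C * volume E := by
          rw [hvolE, ← ENNReal.ofReal_mul hC0, hEq]
      _ ≤ ENNReal.ofReal C * ∑' n, volume (E ∩ Metric.ball (cc n) (rr n)) := by
          gcongr
          calc volume E ≤ volume (⋃ n, E ∩ Metric.ball (cc n) (rr n)) := by
                apply measure_mono
                intro x hx
                rcases mem_iUnion.1 (hcov hx) with ⟨n, hn⟩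
                exact mem_iUnion.2 ⟨n, hx, hn⟩
            _ ≤ ∑' n, volume (E ∩ Metric.ball (cc n) (rr n)) := measure_iUnion_le _
      _ = ∑' n, ENNReal.ofReal C * volume (E ∩ Metric.ball (cc n) (rr n)) :=
          ENNReal.tsum_mul_left.symm
      _ ≤ ∑' n, ENNReal.ofReal (f (2 * rr n)) := ENNReal.tsum_le_tsum fun n => key _ _
  · -- upper bound
    set M : Fin d → ℕ := fun i => ⌈a (σ i) / a'⌉₊ with hM
    have hM1 : ∀ i, 1 ≤ M i := fun i => Nat.one_le_ceil_iff.2 (div_pos (hapos _) ha')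
    set S : Finset (Fin d → ℕ) := Fintype.piFinset fun i => Finset.range (M i) with hS
    set T : Finset ℕ := S.image Encodable.encode with hT
    set ρ₀ : ℝ := 2 * Real.sqrt d * a' with hρ₀
    have hρ₀pos : 0 < ρ₀ := by positivity
    set ctr : (Fin d → ℕ) → EuclideanSpace ℝ (Fin d) :=
      fun v => WithLp.toLp 2 (fun i => b i + (v i : ℝ) * a') with hctr
    set cc : ℕ → EuclideanSpace ℝ (Fin d) := fun n =>
      Option.elim (Encodable.decode₂ (Fin d → ℕ) n) (ctr fun _ => 0) ctr with hcc
    set rr : ℕ → ℝ := fun n => if n ∈ T then ρ₀ else 0 with hrr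
    have hcov : E ⊆ ⋃ n, Metric.ball (cc n) (rr n) := by
      intro x hx
      set v : Fin d → ℕ := fun i => min (⌊(x i - b i) / a'⌋₊) (M i - 1) with hv
      have hvS : v ∈ S := by
        rw [hS, Fintype.mem_piFinset]
        intro i
        rw [Finset.mem_range]
        exact lt_of_le_of_lt (min_le_right _ _) (Nat.sub_lt (hM1 i) one_pos)
      have hdec : Encodable.decode₂ (Fin d → ℕ) (Encodable.encode v) = some v :=
        Encodable.decode₂_encode v
      have hcceq : cc (Encodable.encode v) = ctr v := by rw [hcc]; simp only [hdec]; rfl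
      have hmemT : Encodable.encode v ∈ T := Finset.mem_image_of_mem _ hvS
      have hrreq : rr (Encodable.encode v) = ρ₀ := if_pos hmemT
      refine mem_iUnion.2 ⟨Encodable.encode v, ?_⟩
      rw [Metric.mem_ball, hcceq, hrreq]
      have hcoord : ∀ i, |x i - ctr v i| ≤ a' := by
        intro i
        have hb1 := (hx i).1
        have hb2 := (hx i).2
        have ht0 : 0 ≤ x i - b i := by linarith
        have hlow : (v i : ℝ) * a' ≤ x i - b i := by
          have h1 : (v i : ℝ) ≤ (⌊(x i - b i) / a'⌋₊ : ℝ) := by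
            exact_mod_cast Nat.cast_le.2 (min_le_left _ _)
          have h2 : ((⌊(x i - b i) / a'⌋₊ : ℕ) : ℝ) ≤ (x i - b i) / a' :=
            Nat.floor_le (by positivity)
          calc (v i : ℝ) * a' ≤ ((x i - b i) / a') * a' :=
                mul_le_mul_of_nonneg_right (h1.trans h2) ha'.le
            _ = x i - b i := by field_simp
        have hhigh : x i - b i ≤ ((v i : ℝ) + 1) * a' := by
          rcases le_or_gt (⌊(x i - b i) / a'⌋₊) (M i - 1) with hcs | hcs
          · have hve : v i = ⌊(x i - b i) / a'⌋₊ := min_eq_left hcs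
            have h3 := Nat.lt_floor_add_one ((x i - b i) / a')
            calc x i - b i = ((x i - b i) / a') * a' := by field_simp
              _ ≤ ((v i : ℝ) + 1) * a' := by
                  apply mul_le_mul_of_nonneg_right _ ha'.le
                  rw [hve]
                  exact h3.le
          · have hve : v i = M i - 1 := min_eq_right hcs.le
            have hMa : a (σ i) ≤ (M i : ℝ) * a' := by
              have h4 := Nat.le_ceil (a (σ i) / a')
              calc a (σ i) = (a (σ i) / a') * a' := by field_simp
                _ ≤ (M i : ℝ) * a' := mul_le_mul_of_nonneg_right h4 ha'.le
            have hMv : ((M i : ℕ) : ℝ) = (v i : ℝ) + 1 := by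
              rw [hve]
              have h5 : (M i - 1) + 1 = M i := Nat.succ_pred_eq_of_pos (hM1 i)
              exact_mod_cast (congrArg (Nat.cast (R := ℝ)) h5).symm
            rw [← hMv]
            linarith
        have hexp : x i - ctr v i = (x i - b i) - (v i : ℝ) * a' := by
          simp only [hctr, WithLp.ofLp_toLp]
          ring
        rw [hexp, abs_le]
        constructor <;> nlinarith [hlow, hhigh]
      have hdist : dist x (ctr v) ≤ Real.sqrt d * a' := by
        rw [EuclideanSpace.dist_eq]
        have hstep : ∀ i : Fin d, dist (x i) (ctr v i) ^ 2 ≤ a' ^ 2 := by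
          intro i
          rw [Real.dist_eq]
          exact pow_le_pow_left₀ (abs_nonneg _) (hcoord i) 2
        have hb : ∑ i, dist (x i) (ctr v i) ^ 2 ≤ (d : ℝ) * a' ^ 2 := by
          have h7 := Finset.sum_le_sum (fun i (_ : i ∈ Finset.univ) => hstep i)
          rw [Finset.sum_const, Finset.card_univ, Fintype.card_fin, nsmul_eq_mul] at h7
          exact h7
        have h8 : Real.sqrt ((d : ℝ) * a' ^ 2) = Real.sqrt d * a' := by
          rw [Real.sqrt_mul (Nat.cast_nonneg d), Real.sqrt_sq ha'.le]
        exact (Real.sqrt_le_sqrt hb).trans (le_of_eq h8)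
      have hsd0 : 0 < Real.sqrt d * a' := mul_pos (lt_of_lt_of_le one_pos hsd) ha'
      have hρ₀' : ρ₀ = 2 * (Real.sqrt d * a') := by rw [hρ₀]; ring
      calc dist x (ctr v) ≤ Real.sqrt d * a' := hdist
        _ < ρ₀ := by rw [hρ₀']; linarith
    have hle1 : hContent f E ≤ ∑' n, ENNReal.ofReal (f (2 * rr n)) := by
      unfold hContent
      exact iInf_le_of_le cc (iInf_le_of_le rr (iInf_le_of_le hcov le_rfl))
    have hsum : ∑' n, ENNReal.ofReal (f (2 * rr n))
        = (T.card : ℝ≥0∞) * ENNReal.ofReal (f (2 * ρ₀)) := by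
      have h1 : ∀ n ∉ T, ENNReal.ofReal (f (2 * rr n)) = 0 := fun n hn => by
        simp only [hrr, if_neg hn, mul_zero, hf0, ENNReal.ofReal_zero]
      rw [tsum_eq_sum (s := T) h1]
      have h2 : ∀ n ∈ T, ENNReal.ofReal (f (2 * rr n)) = ENNReal.ofReal (f (2 * ρ₀)) :=
        fun n hn => by simp only [hrr, if_pos hn]
      rw [Finset.sum_congr rfl h2, Finset.sum_const, nsmul_eq_mul]
    have hcard : (T.card : ℝ) = ∏ i, (M i : ℝ) := by
      rw [hT, Finset.card_image_of_injective _ Encodable.encode_injective, hS,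
        Fintype.card_piFinset]
      push_cast
      simp [Finset.card_range]
    have hMle : ∀ i, (M i : ℝ) ≤ if (σ i : ℕ) < k then 2 * a (σ i) / a' else 1 := by
      intro i
      by_cases hik : (σ i : ℕ) < k
      · rw [if_pos hik]
        have hge1 : a' ≤ a (σ i) := hasort (σ i) ⟨k, hk⟩ (by
          rw [Fin.le_def]; exact hik.le)
        have h1 : (⌈a (σ i) / a'⌉₊ : ℝ) < a (σ i) / a' + 1 :=
          Nat.ceil_lt_add_one (div_pos (hapos _) ha').le
        have h2 : 1 ≤ a (σ i) / a' := (one_le_div ha').2 hge1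
        have : (M i : ℝ) < a (σ i) / a' + 1 := h1
        have h3 : a (σ i) / a' + 1 ≤ 2 * a (σ i) / a' := by
          rw [mul_div_assoc]
          linarith
        linarith
      · rw [if_neg hik]
        push_neg at hik
        have h4 : a (σ i) ≤ a' := hasort ⟨k, hk⟩ (σ i) (by rw [Fin.le_def]; exact hik)
        have h5 : a (σ i) / a' ≤ 1 := (div_le_one ha').2 h4
        have h6 : M i ≤ 1 := by
          rw [hM]
          exact Nat.ceil_le.2 (by simpa using h5)
        exact_mod_cast h6
    have hprodM : ∏ i, (M i : ℝ) ≤ 2 ^ k * Pk / a' ^ k := by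
      calc ∏ i, (M i : ℝ) ≤ ∏ i, (if ((σ i : ℕ)) < k then 2 * a (σ i) / a' else 1) :=
          Finset.prod_le_prod (fun i _ => Nat.cast_nonneg _) (fun i _ => hMle i)
        _ = ∏ j : Fin d, (if ((j : ℕ)) < k then 2 * a j / a' else 1) :=
          Fintype.prod_equiv σ _ _ (fun i => rfl)
        _ = ∏ j ∈ Fk, (2 * a j / a') := by
          rw [hFk, Finset.prod_filter]
        _ = 2 ^ k * Pk / a' ^ k := by
          rw [Finset.prod_div_distrib, Finset.prod_mul_distrib, Finset.prod_const,
            Finset.prod_const, hPk, hFk, myFilterCard d k hk.le]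
    have hfb : f (2 * ρ₀) ≤ (4 * Real.sqrt d) ^ (k + 1) * f a' := by
      have hy : 2 * ρ₀ = (4 * Real.sqrt d) * a' := by rw [hρ₀]; ring
      have hbase : (1 : ℝ) < 4 * Real.sqrt d := by nlinarith [hsd]
      have hlt : a' < (4 * Real.sqrt d) * a' := by nlinarith [ha', hbase]
      have h3 := hge a' ((4 * Real.sqrt d) * a') ha' hlt
      have hcast : ((k : ℝ) + 1) = ((k + 1 : ℕ) : ℝ) := by push_cast; ring
      rw [hcast, Real.rpow_natCast, Real.rpow_natCast] at h3
      rw [div_le_div_iff₀ (pow_pos (by positivity) _) (pow_pos ha' _)] at h3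
      have h4 : f ((4 * Real.sqrt d) * a') * a' ^ (k + 1)
          ≤ ((4 * Real.sqrt d) ^ (k + 1) * f a') * a' ^ (k + 1) := by
        calc f ((4 * Real.sqrt d) * a') * a' ^ (k + 1)
            ≤ f a' * ((4 * Real.sqrt d) * a') ^ (k + 1) := h3
          _ = ((4 * Real.sqrt d) ^ (k + 1) * f a') * a' ^ (k + 1) := by
            rw [mul_pow]; ring
      rw [hy]
      exact le_of_mul_le_mul_right h4 (pow_pos ha' _)
    have hreal : (T.card : ℝ) * f (2 * ρ₀)
        ≤ 2 ^ d * (4 * Real.sqrt d) ^ d * (Pk * a' ^ (-(k : ℝ)) * f a') := by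
      rw [hcard, hrpow]
      have hf2nn : 0 ≤ f (2 * ρ₀) := hfnn _ (by positivity)
      calc (∏ i, (M i : ℝ)) * f (2 * ρ₀)
          ≤ (2 ^ k * Pk / a' ^ k) * ((4 * Real.sqrt d) ^ (k + 1) * f a') :=
          mul_le_mul hprodM hfb hf2nn (by positivity)
        _ = (2 ^ k * (4 * Real.sqrt d) ^ (k + 1)) * (Pk * (a' ^ k)⁻¹ * f a') := by
          rw [div_eq_mul_inv]; ring
        _ ≤ (2 ^ d * (4 * Real.sqrt d) ^ d) * (Pk * (a' ^ k)⁻¹ * f a') := by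
          apply mul_le_mul_of_nonneg_right
          · have e1 : (2 : ℝ) ^ k ≤ 2 ^ d := pow_le_pow_right₀ one_le_two hk.le
            have e2 : (4 * Real.sqrt d) ^ (k + 1) ≤ (4 * Real.sqrt d) ^ d :=
              pow_le_pow_right₀ (by nlinarith [hsd]) hk
            exact mul_le_mul e1 e2 (by positivity) (by positivity)
          · exact mul_nonneg (mul_nonneg hPkpos.le (by positivity)) (hfnn _ ha'.le)
    calc hContent f E ≤ ∑' n, ENNReal.ofReal (f (2 * rr n)) := hle1
      _ = (T.card : ℝ≥0∞) * ENNReal.ofReal (f (2 * ρ₀)) := hsum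
      _ = ENNReal.ofReal ((T.card : ℝ) * f (2 * ρ₀)) := by
        rw [ENNReal.ofReal_mul (Nat.cast_nonneg _), ENNReal.ofReal_natCast]
      _ ≤ ENNReal.ofReal (2 ^ d * (4 * Real.sqrt d) ^ d * (Pk * a' ^ (-(k : ℝ)) * f a')) :=
        ENNReal.ofReal_le_ofReal hreal

end
end

section
/- Let n,m ≥ 1 be integers, q ∈ ℤ^n∖{0}, δ = (δ_1,…,δ_m) ∈ (0,1/2)^m, and let μ be a Borel probability measure supported on [0,1]^{nm}. Then there is a constant C depending only on n and m such that μ(R̄(q,δ)) ≤ C·δ_1⋯δ_m·(1 + Σ_{t∈ℤ^m∖{0}, |t_j|≤2/δ_j for all 1≤j≤m} |μ̂(t_1q,…,t_mq)|). -/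
open MeasureTheory Metric Set Filter
open scoped ENNReal NNReal Topology BigOperators

noncomputable section

namespace Stmt14Aux

noncomputable def cexp (θ : ℝ) : ℂ := Complex.exp ((θ : ℂ) * Complex.I)

lemma cexp_add (a b : ℝ) : cexp (a + b) = cexp a * cexp b := by
  simp only [cexp, ← Complex.exp_add]
  congr 1; push_cast; ring

lemma conj_cexp (a : ℝ) : (starRingEnd ℂ) (cexp a) = cexp (-a) := by
  simp only [cexp, ← Complex.exp_conj, map_mul, Complex.conj_I, Complex.conj_ofReal]
  congr 1; push_cast; ring

lemma abs_cexp (a : ℝ) : ‖cexp a‖ = 1 := Complex.norm_exp_ofReal_mul_I a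

lemma cexp_sum {ι : Type*} (s : Finset ι) (f : ι → ℝ) :
    cexp (∑ i ∈ s, f i) = ∏ i ∈ s, cexp (f i) := by
  simp only [cexp]
  rw [← Complex.exp_sum]
  congr 1; push_cast; rw [Finset.sum_mul]

noncomputable def DD (N : ℕ) (y : ℝ) : ℂ :=
  ∑ s ∈ Finset.range (N + 1), cexp (2 * Real.pi * s * y)

lemma DD_periodic (N : ℕ) (y : ℝ) : DD N y = DD N (y - round y) := by
  unfold DD
  refine Finset.sum_congr rfl fun s _ => ?_
  have h : 2 * Real.pi * s * y = 2 * Real.pi * s * (y - round y) + 2 * Real.pi * s * (round y) := by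
    ring
  rw [h, cexp_add]
  have h1 : cexp (2 * Real.pi * s * (round y)) = 1 := by
    have h2 : ((2 * Real.pi * s * (round y) : ℝ) : ℂ) * Complex.I
        = ((s * round y : ℤ) : ℂ) * (2 * Real.pi * Complex.I) := by push_cast; ring
    rw [cexp, h2, Complex.exp_int_mul_two_pi_mul_I]
  rw [h1, mul_one]

lemma DD_lower (N : ℕ) (δ y : ℝ) (hNδ : (N : ℝ) * δ ≤ 1 / 6)
    (hy : distInt y ≤ δ) : ((N : ℝ) + 1) ^ 2 / 4 ≤ Complex.normSq (DD N y) := by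
  rw [DD_periodic]
  set u : ℝ := y - round y with hu
  have hud : |u| ≤ δ := hy
  have hre : ((N : ℝ) + 1) / 2 ≤ (DD N u).re := by
    have h : (DD N u).re = ∑ s ∈ Finset.range (N + 1), Real.cos (2 * Real.pi * s * u) := by
      unfold DD
      rw [Complex.re_sum]
      exact Finset.sum_congr rfl fun s _ => Complex.exp_ofReal_mul_I_re _
    rw [h]
    have hcard : ((N : ℝ) + 1) / 2 = ∑ _s ∈ Finset.range (N + 1), (1 / 2 : ℝ) := by
      rw [Finset.sum_const, Finset.card_range]; push_cast; ring
    rw [hcard]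
    refine Finset.sum_le_sum fun s hs => ?_
    have hsN : (s : ℝ) ≤ N := by
      exact_mod_cast Nat.lt_succ_iff.mp (Finset.mem_range.mp hs)
    have habs : |2 * Real.pi * s * u| ≤ Real.pi / 3 := by
      rw [abs_mul]
      have h1 : |2 * Real.pi * (s : ℝ)| = 2 * Real.pi * s := by
        rw [abs_of_nonneg]; positivity
      rw [h1]
      have hsu0 : (s : ℝ) * |u| ≤ (N : ℝ) * δ :=
        mul_le_mul hsN hud (abs_nonneg u) (Nat.cast_nonneg N)
      have hsu : (s : ℝ) * |u| ≤ 1 / 6 := le_trans hsu0 hNδ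
      clear hsu0
      nlinarith [Real.pi_pos]
    calc (1 / 2 : ℝ) = Real.cos (Real.pi / 3) := Real.cos_pi_div_three.symm
      _ ≤ Real.cos |2 * Real.pi * s * u| := by
          apply Real.cos_le_cos_of_nonneg_of_le_pi (abs_nonneg _)
          · linarith [Real.pi_pos]
          · exact habs
      _ = Real.cos (2 * Real.pi * s * u) := Real.cos_abs _
  have h0 : (0:ℝ) ≤ ((N : ℝ) + 1) / 2 := by positivity
  rw [Complex.normSq_apply]
  nlinarith [sq_nonneg ((DD N u).im)]

lemma DD_abs_le (N : ℕ) (y : ℝ) : ‖DD N y‖ ≤ (N : ℝ) + 1 := by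
  unfold DD
  calc ‖∑ s ∈ Finset.range (N + 1), cexp (2 * Real.pi * s * y)‖
      ≤ ∑ s ∈ Finset.range (N + 1), ‖cexp (2 * Real.pi * s * y)‖ := by
        exact
          norm_sum_le (Finset.range (N+1)) (fun s => cexp (2 * Real.pi * s * y))
    _ = ∑ _s ∈ Finset.range (N + 1), (1:ℝ) := Finset.sum_congr rfl fun s _ => abs_cexp _
    _ = (N : ℝ) + 1 := by rw [Finset.sum_const, Finset.card_range]; simp

lemma DD_mul_conj (N : ℕ) (y : ℝ) :
    DD N y * (starRingEnd ℂ) (DD N y)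
      = ∑ p ∈ (Finset.range (N+1)) ×ˢ (Finset.range (N+1)),
          cexp (-(2 * Real.pi * (((p.2:ℝ) - p.1) * y))) := by
  unfold DD
  rw [map_sum, Finset.sum_mul_sum, ← Finset.sum_product']
  refine Finset.sum_congr rfl fun p _ => ?_
  rw [conj_cexp, ← cexp_add]
  congr 1; ring

lemma DD_cont (N : ℕ) : Continuous (DD N) := by
  unfold DD cexp
  fun_prop

/-- The frequency vector `(t_1 q, …, t_m q)`. -/
def vf (n m : ℕ) (q : Fin n → ℤ) (t : Fin m → ℤ) : EuclideanSpace ℝ (Fin m × Fin n) :=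
  WithLp.toLp 2 (fun p : Fin m × Fin n => (t p.1 : ℝ) * (q p.2 : ℝ))

/-- The linear form `q · x_j`. -/
def Yf (n m : ℕ) (q : Fin n → ℤ) (j : Fin m) (x : EuclideanSpace ℝ (Fin m × Fin n)) : ℝ :=
  ∑ i, (q i : ℝ) * x (j, i)

/-- `t(σ)_j = σ(j).2 - σ(j).1`. -/
def tf (m : ℕ) (σ : Fin m → ℕ × ℕ) : Fin m → ℤ := fun j => ((σ j).2 : ℤ) - ((σ j).1 : ℤ)

/-- The coefficient `a_j = 4/(N_j+1)²`. -/
def af {m : ℕ} (N : Fin m → ℕ) (j : Fin m) : ℝ := 4 / ((N j : ℝ) + 1) ^ 2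

lemma af_pos {m : ℕ} (N : Fin m → ℕ) (j : Fin m) : 0 < af N j := by
  unfold af; positivity

lemma inner_vf {n m : ℕ} (q : Fin n → ℤ) (t : Fin m → ℤ)
    (x : EuclideanSpace ℝ (Fin m × Fin n)) :
    (inner ℝ x (vf n m q t) : ℝ) = ∑ j, (t j : ℝ) * Yf n m q j x := by
  simp only [PiLp.inner_apply, RCLike.inner_apply, conj_trivial, vf, Yf, PiLp.toLp_apply]
  rw [Fintype.sum_prod_type]
  refine Finset.sum_congr rfl fun j _ => ?_
  rw [Finset.mul_sum]
  refine Finset.sum_congr rfl fun i _ => ?_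
  ring

lemma Yf_cont {n m : ℕ} (q : Fin n → ℤ) (j : Fin m) : Continuous (Yf n m q j) := by
  unfold Yf
  exact continuous_finset_sum _ fun i _ =>
    continuous_const.mul ((EuclideanSpace.proj ((j, i) : Fin m × Fin n)).continuous)

/-- The majorant function `G`. -/
noncomputable def Gf (n m : ℕ) (q : Fin n → ℤ) (N : Fin m → ℕ)
    (x : EuclideanSpace ℝ (Fin m × Fin n)) : ℝ :=
  ∏ j, af N j * Complex.normSq (DD (N j) (Yf n m q j x))

lemma Gf_nonneg {n m : ℕ} (q : Fin n → ℤ) (N : Fin m → ℕ)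
    (x : EuclideanSpace ℝ (Fin m × Fin n)) : 0 ≤ Gf n m q N x :=
  Finset.prod_nonneg fun j _ => mul_nonneg (af_pos N j).le (Complex.normSq_nonneg _)

lemma Gf_cont {n m : ℕ} (q : Fin n → ℤ) (N : Fin m → ℕ) : Continuous (Gf n m q N) := by
  unfold Gf
  exact continuous_finset_prod _ fun j _ =>
    continuous_const.mul (Complex.continuous_normSq.comp ((DD_cont (N j)).comp (Yf_cont q j)))

lemma Gf_le {n m : ℕ} (q : Fin n → ℤ) (N : Fin m → ℕ)
    (x : EuclideanSpace ℝ (Fin m × Fin n)) : Gf n m q N x ≤ ∏ _j : Fin m, (4:ℝ) := by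
  unfold Gf
  refine Finset.prod_le_prod (fun j _ => mul_nonneg (af_pos N j).le (Complex.normSq_nonneg _))
    (fun j _ => ?_)
  have h1 : Complex.normSq (DD (N j) (Yf n m q j x)) ≤ ((N j : ℝ) + 1) ^ 2 := by
    rw [Complex.normSq_eq_norm_sq]
    have := DD_abs_le (N j) (Yf n m q j x)
    have h0 := norm_nonneg (DD (N j) (Yf n m q j x))
    nlinarith
  have h2 : af N j * Complex.normSq (DD (N j) (Yf n m q j x)) ≤ af N j * ((N j:ℝ)+1)^2 :=
    mul_le_mul_of_nonneg_left h1 (af_pos N j).le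
  have h3 : af N j * ((N j:ℝ)+1)^2 = 4 := by
    unfold af
    field_simp
  linarith

lemma Gf_one_le {n m : ℕ} (q : Fin n → ℤ) (N : Fin m → ℕ) (δ : Fin m → ℝ)
    (hNδ : ∀ j, (N j : ℝ) * δ j ≤ 1 / 6)
    (x : EuclideanSpace ℝ (Fin m × Fin n)) (hx : x ∈ RsetC n m q δ) :
    (1:ℝ) ≤ Gf n m q N x := by
  unfold Gf
  have h : ∀ j ∈ Finset.univ, (1:ℝ) ≤ af N j * Complex.normSq (DD (N j) (Yf n m q j x)) := by
    intro j _
    have hlow := DD_lower (N j) (δ j) (Yf n m q j x) (hNδ j) (hx.2 j)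
    have h3 : af N j * (((N j:ℝ)+1)^2/4) = 1 := by
      unfold af; field_simp
    calc (1:ℝ) = af N j * (((N j:ℝ)+1)^2/4) := h3.symm
      _ ≤ af N j * Complex.normSq (DD (N j) (Yf n m q j x)) :=
          mul_le_mul_of_nonneg_left hlow (af_pos N j).le
  calc (1:ℝ) = ∏ _j : Fin m, (1:ℝ) := by simp
    _ ≤ _ := Finset.prod_le_prod (by intros; norm_num) h

lemma Gf_expand {n m : ℕ} (q : Fin n → ℤ) (N : Fin m → ℕ)
    (x : EuclideanSpace ℝ (Fin m × Fin n)) :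
    ((Gf n m q N x : ℝ) : ℂ)
      = ∑ σ ∈ Fintype.piFinset
            (fun j => (Finset.range (N j + 1)) ×ˢ (Finset.range (N j + 1))),
          ((∏ j, af N j : ℝ) : ℂ)
            * cexp (-2 * Real.pi * (inner ℝ x (vf n m q (tf m σ)) : ℝ)) := by
  unfold Gf
  push_cast
  calc (∏ j, (af N j : ℂ) * ((Complex.normSq (DD (N j) (Yf n m q j x)) : ℝ) : ℂ))
      = ∏ j, ∑ p ∈ (Finset.range (N j + 1)) ×ˢ (Finset.range (N j + 1)),
          ((af N j : ℂ) * cexp (-(2 * Real.pi * (((p.2:ℝ) - p.1) * Yf n m q j x)))) := by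
        refine Finset.prod_congr rfl fun j _ => ?_
        rw [← Complex.mul_conj, DD_mul_conj, Finset.mul_sum]
    _ = ∑ σ ∈ Fintype.piFinset
            (fun j => (Finset.range (N j + 1)) ×ˢ (Finset.range (N j + 1))),
          ∏ j, ((af N j : ℂ)
            * cexp (-(2 * Real.pi * ((((σ j).2:ℝ) - (σ j).1) * Yf n m q j x)))) :=
        Finset.prod_univ_sum _ _
    _ = _ := by
        refine Finset.sum_congr rfl fun σ _ => ?_
        rw [Finset.prod_mul_distrib, ← cexp_sum]
        have hexp : (∑ j, -(2 * Real.pi * ((((σ j).2:ℝ) - (σ j).1) * Yf n m q j x)))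
            = -2 * Real.pi * (inner ℝ x (vf n m q (tf m σ)) : ℝ) := by
          rw [inner_vf, Finset.mul_sum]
          refine Finset.sum_congr rfl fun j _ => ?_
          unfold tf
          push_cast
          ring
        rw [hexp]

end Stmt14Aux

namespace Stmt14Aux

lemma integrable_cexp {n m : ℕ} (μ : Measure (EuclideanSpace ℝ (Fin m × Fin n)))
    [IsFiniteMeasure μ] (v : EuclideanSpace ℝ (Fin m × Fin n)) :
    Integrable (fun x => cexp (-2 * Real.pi * (inner ℝ x v : ℝ))) μ := by
  have hc : Continuous fun x : EuclideanSpace ℝ (Fin m × Fin n) =>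
      cexp (-2 * Real.pi * (inner ℝ x v : ℝ)) := by
    unfold cexp
    have h1 : Continuous fun x : EuclideanSpace ℝ (Fin m × Fin n) => (inner ℝ x v : ℝ) :=
      continuous_id.inner continuous_const
    fun_prop
  refine (integrable_const (1:ℝ)).mono' hc.aestronglyMeasurable (ae_of_all _ fun x => ?_)
  rw [abs_cexp]

lemma muFT_eq {n m : ℕ} (μ : Measure (EuclideanSpace ℝ (Fin m × Fin n)))
    (v : EuclideanSpace ℝ (Fin m × Fin n)) :
    muFT μ v = ∫ x, cexp (-2 * Real.pi * (inner ℝ x v : ℝ)) ∂μ := rfl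

lemma abs_muFT_vf_zero {n m : ℕ} (q : Fin n → ℤ)
    (μ : Measure (EuclideanSpace ℝ (Fin m × Fin n))) [IsProbabilityMeasure μ] :
    ‖muFT μ (vf n m q 0)‖ = 1 := by
  rw [muFT_eq]
  have h : (fun x : EuclideanSpace ℝ (Fin m × Fin n) =>
      cexp (-2 * Real.pi * (inner ℝ x (vf n m q 0) : ℝ))) = fun _ => 1 := by
    funext x
    have h0 : (inner ℝ x (vf n m q (0 : Fin m → ℤ)) : ℝ) = 0 := by
      rw [inner_vf]; simp
    rw [h0]
    norm_num [cexp]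
  rw [h, integral_const]
  simp [measure_univ]

lemma finT {m : ℕ} (δ : Fin m → ℝ) (hδ : ∀ j, 0 < δ j) :
    Finite {t : Fin m → ℤ // t ≠ 0 ∧ ∀ j, (|t j| : ℝ) ≤ 2 / δ j} := by
  have hfin : {t : Fin m → ℤ | t ≠ 0 ∧ ∀ j, (|t j| : ℝ) ≤ 2 / δ j}.Finite := by
    refine Set.Finite.subset
      (Set.Finite.pi (t := fun j : Fin m => Set.Icc (-(⌈2/δ j⌉)) ⌈2/δ j⌉)
        fun j => Set.finite_Icc _ _) ?_
    intro t ht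
    simp only [Set.mem_pi, Set.mem_univ, Set.mem_Icc, forall_true_left]
    intro j
    have h2 : (|t j| : ℝ) ≤ (⌈2/δ j⌉ : ℝ) := le_trans (ht.2 j) (Int.le_ceil _)
    have h3 : |t j| ≤ ⌈2/δ j⌉ := by exact_mod_cast h2
    exact abs_le.mp h3
  exact hfin.to_subtype

end Stmt14Aux

open Stmt14Aux

/-- Fourier-analytic upper bound for the measure of `R̄(q,δ)` (Lemma 5.2). -/
theorem stmt14 (n m : ℕ) (hn : 1 ≤ n) (hm : 1 ≤ m) :
    ∃ C : ℝ, 0 < C ∧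
      ∀ q : Fin n → ℤ, q ≠ 0 →
      ∀ δ : Fin m → ℝ, (∀ j, 0 < δ j ∧ δ j < 1 / 2) →
      ∀ μ : Measure (EuclideanSpace ℝ (Fin m × Fin n)), IsProbabilityMeasure μ →
        μ (unitCube n m)ᶜ = 0 →
        μ (RsetC n m q δ) ≤ ENNReal.ofReal (C * (∏ j, δ j) *
          (1 + ∑' t : {t : Fin m → ℤ // t ≠ 0 ∧ ∀ j, (|t j| : ℝ) ≤ 2 / δ j},
            ‖muFT μ (WithLp.toLp 2 (fun p : Fin m × Fin n => (t.1 p.1 : ℝ) * (q p.2 : ℝ)))‖)) := by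
  classical
  refine ⟨24 ^ m, by positivity, ?_⟩
  intro q hq δ hδ μ hμ hsupp
  haveI := hμ
  have hδ0 : ∀ j, 0 < δ j := fun j => (hδ j).1
  set N : Fin m → ℕ := fun j => ⌊1 / (6 * δ j)⌋₊ with hNdef
  have hNle : ∀ j, (N j : ℝ) ≤ 1 / (6 * δ j) := fun j =>
    Nat.floor_le (by have := hδ0 j; positivity)
  have hNδ : ∀ j, (N j : ℝ) * δ j ≤ 1 / 6 := by
    intro j
    have h1 := hNle j
    have h0 := hδ0 j
    calc (N j : ℝ) * δ j ≤ (1 / (6 * δ j)) * δ j := by nlinarith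
      _ = 1 / 6 := by field_simp
  have hNup : ∀ j, 1 / (6 * δ j) < (N j : ℝ) + 1 := fun j => Nat.lt_floor_add_one _
  have haN : ∀ j, af N j * ((N j : ℝ) + 1) ≤ 24 * δ j := by
    intro j
    have h0 := hδ0 j
    have h4 : 1 < ((N j : ℝ) + 1) * (6 * δ j) := (div_lt_iff₀ (by positivity)).mp (hNup j)
    have hne : ((N j : ℝ) + 1) ≠ 0 := by positivity
    have h3 : af N j * ((N j : ℝ) + 1) = 4 / ((N j : ℝ) + 1) := by
      unfold af; field_simp
    rw [h3, div_le_iff₀ (by positivity)]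
    nlinarith
  set S : Finset (Fin m → ℕ × ℕ) :=
    Fintype.piFinset (fun j => (Finset.range (N j + 1)) ×ˢ (Finset.range (N j + 1))) with hSdef
  set F : (Fin m → ℤ) → ℝ := fun t => ‖muFT μ (vf n m q t)‖ with hFdef
  set X : ℝ := ∑' t : {t : Fin m → ℤ // t ≠ 0 ∧ ∀ j, (|t j| : ℝ) ≤ 2 / δ j},
      ‖muFT μ (WithLp.toLp 2 (fun p : Fin m × Fin n => (t.1 p.1 : ℝ) * (q p.2 : ℝ)))‖ with hXdef
  haveI hTfin : Finite {t : Fin m → ℤ // t ≠ 0 ∧ ∀ j, (|t j| : ℝ) ≤ 2 / δ j} := finT δ hδ0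
  have hFnn : ∀ t, 0 ≤ F t := fun t => norm_nonneg _
  have hXeq : X = ∑' t : {t : Fin m → ℤ // t ≠ 0 ∧ ∀ j, (|t j| : ℝ) ≤ 2 / δ j}, F t.1 := by
    rw [hXdef, hFdef]
    rfl
  have hXnn : 0 ≤ X := by
    rw [hXeq]; exact tsum_nonneg fun t => hFnn _
  have hafnn : (0:ℝ) ≤ ∏ j, af N j := Finset.prod_nonneg fun j _ => (af_pos N j).le
  -- fiber counting
  have hD : ∀ τ : Fin m → ℤ,
      ((S.filter fun σ => tf m σ = τ).card : ℝ) ≤ ∏ j, ((N j : ℝ) + 1) := by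
    intro τ
    have hcard : (S.filter fun σ => tf m σ = τ).card
        ≤ (Fintype.piFinset fun j => Finset.range (N j + 1)).card := by
      apply Finset.card_le_card_of_injOn (fun σ => fun j => (σ j).1)
      · intro σ hσ
        have hσS := (Finset.mem_filter.mp hσ).1
        rw [Finset.mem_coe, Fintype.mem_piFinset]
        intro j
        exact (Finset.mem_product.mp ((Fintype.mem_piFinset.mp hσS) j)).1
      · intro σ hσ σ' hσ' hfeq
        have h1 := (Finset.mem_filter.mp (Finset.mem_coe.mp hσ)).2
        have h2 := (Finset.mem_filter.mp (Finset.mem_coe.mp hσ')).2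
        funext j
        have e1 : (σ j).1 = (σ' j).1 := congrFun hfeq j
        have e2 : ((σ j).2 : ℤ) - ((σ j).1 : ℤ) = τ j := congrFun h1 j
        have e3 : ((σ' j).2 : ℤ) - ((σ' j).1 : ℤ) = τ j := congrFun h2 j
        have e4 : (σ j).2 = (σ' j).2 := by omega
        exact Prod.ext e1 e4
    rw [Fintype.card_piFinset] at hcard
    simp only [Finset.card_range] at hcard
    calc ((S.filter fun σ => tf m σ = τ).card : ℝ)
        ≤ ((∏ j, (N j + 1) : ℕ) : ℝ) := by exact_mod_cast hcard
      _ = ∏ j, ((N j : ℝ) + 1) := by push_cast; rfl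
  -- F at 0
  have hF0 : F 0 = 1 := by rw [hFdef]; exact abs_muFT_vf_zero q μ
  -- the majorant
  set G : EuclideanSpace ℝ (Fin m × Fin n) → ℝ := Gf n m q N with hGdef
  have hGnn : ∀ x, 0 ≤ G x := Gf_nonneg q N
  have hGcont : Continuous G := Gf_cont q N
  have hGint : Integrable G μ := by
    refine (integrable_const (∏ _j : Fin m, (4:ℝ))).mono' hGcont.aestronglyMeasurable
      (ae_of_all _ fun x => ?_)
    rw [Real.norm_eq_abs, abs_of_nonneg (hGnn x)]
    exact Gf_le q N x
  have hGone : ∀ x ∈ RsetC n m q δ, (1:ℝ) ≤ G x := fun x hx => Gf_one_le q N δ hNδ x hx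
  -- Fourier expansion of the integral
  have hExp : ((∫ x, G x ∂μ : ℝ) : ℂ)
      = ∑ σ ∈ S, ((∏ j, af N j : ℝ) : ℂ) * muFT μ (vf n m q (tf m σ)) := by
    calc ((∫ x, G x ∂μ : ℝ) : ℂ)
        = ∫ x, ((G x : ℝ) : ℂ) ∂μ := (integral_ofReal (𝕜 := ℂ) (f := G)).symm
      _ = ∫ x, (∑ σ ∈ S, ((∏ j, af N j : ℝ) : ℂ)
            * cexp (-2 * Real.pi * (inner ℝ x (vf n m q (tf m σ)) : ℝ))) ∂μ := by
          refine integral_congr_ae (Filter.EventuallyEq.of_eq (funext fun x => ?_))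
          rw [hGdef, hSdef]
          exact Gf_expand q N x
      _ = ∑ σ ∈ S, ∫ x, ((∏ j, af N j : ℝ) : ℂ)
            * cexp (-2 * Real.pi * (inner ℝ x (vf n m q (tf m σ)) : ℝ)) ∂μ :=
          integral_finset_sum S (fun σ _ => (integrable_cexp μ _).const_mul _)
      _ = ∑ σ ∈ S, ((∏ j, af N j : ℝ) : ℂ) * muFT μ (vf n m q (tf m σ)) :=
          Finset.sum_congr rfl fun σ _ => by rw [integral_const_mul, muFT_eq]
  -- absolute value bound
  have habs : ∫ x, G x ∂μ ≤ ∑ σ ∈ S, (∏ j, af N j) * F (tf m σ) := by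
    have h0 : 0 ≤ ∫ x, G x ∂μ := integral_nonneg hGnn
    have h1 : ∫ x, G x ∂μ = ‖((∫ x, G x ∂μ : ℝ) : ℂ)‖ := by
      rw [Complex.norm_of_nonneg h0]
    rw [h1, hExp]
    calc ‖∑ σ ∈ S, ((∏ j, af N j : ℝ) : ℂ) * muFT μ (vf n m q (tf m σ))‖
        ≤ ∑ σ ∈ S, ‖((∏ j, af N j : ℝ) : ℂ) * muFT μ (vf n m q (tf m σ))‖ := by
          exact norm_sum_le S
            (fun σ => ((∏ j, af N j : ℝ) : ℂ) * muFT μ (vf n m q (tf m σ)))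
      _ = ∑ σ ∈ S, (∏ j, af N j) * F (tf m σ) := Finset.sum_congr rfl fun σ _ => by
          rw [norm_mul, Complex.norm_of_nonneg hafnn, hFdef]
  -- splitting the sum
  have hsplit : ∑ σ ∈ S, (∏ j, af N j) * F (tf m σ)
      ≤ (∏ j, af N j * ((N j : ℝ) + 1)) * (1 + X) := by
    rw [← Finset.sum_filter_add_sum_filter_not S (fun σ => tf m σ = 0)]
    have hprodsplit : ∏ j, af N j * ((N j : ℝ) + 1)
        = (∏ j, ((N j : ℝ) + 1)) * ∏ j, af N j := by
      rw [Finset.prod_mul_distrib]; ring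
    have hpart0 : ∑ σ ∈ S.filter (fun σ => tf m σ = 0), (∏ j, af N j) * F (tf m σ)
        ≤ ∏ j, af N j * ((N j : ℝ) + 1) := by
      have hcongr : ∀ σ ∈ S.filter (fun σ => tf m σ = 0),
          (∏ j, af N j) * F (tf m σ) = ∏ j, af N j := by
        intro σ hσ
        rw [(Finset.mem_filter.mp hσ).2, hF0, mul_one]
      rw [Finset.sum_congr rfl hcongr, Finset.sum_const, nsmul_eq_mul]
      rw [hprodsplit]
      exact mul_le_mul_of_nonneg_right (hD 0) hafnn
    have hpart1 : ∑ σ ∈ S.filter (fun σ => ¬ tf m σ = 0), (∏ j, af N j) * F (tf m σ)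
        ≤ (∏ j, af N j * ((N j : ℝ) + 1)) * X := by
      rw [← Finset.mul_sum]
      set S₁ : Finset (Fin m → ℕ × ℕ) := S.filter (fun σ => ¬ tf m σ = 0) with hS₁def
      have hP : ∀ τ ∈ S₁.image (tf m), τ ≠ 0 ∧ ∀ j, (|τ j| : ℝ) ≤ 2 / δ j := by
        intro τ hτ
        obtain ⟨σ, hσ, rfl⟩ := Finset.mem_image.mp hτ
        obtain ⟨hσS, hσne⟩ := Finset.mem_filter.mp hσ
        refine ⟨hσne, fun j => ?_⟩
        have hmem := (Fintype.mem_piFinset.mp hσS) j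
        rw [Finset.mem_product, Finset.mem_range, Finset.mem_range] at hmem
        have h1 : (σ j).1 ≤ N j := Nat.lt_succ_iff.mp hmem.1
        have h2 : (σ j).2 ≤ N j := Nat.lt_succ_iff.mp hmem.2
        have habsz : |tf m σ j| ≤ (N j : ℤ) := by
          unfold tf
          simp only [abs_le]
          omega
        have h5 : (|tf m σ j| : ℝ) ≤ (N j : ℝ) := by exact_mod_cast habsz
        have h6 : (N j : ℝ) ≤ 2 / δ j := by
          refine le_trans (hNle j) ?_
          have h0 := hδ0 j
          rw [div_le_div_iff₀ (by positivity) (by positivity)]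
          nlinarith
        linarith
      have himg : ∑ τ ∈ S₁.image (tf m), F τ ≤ X := by
        have heq : ∑ τ ∈ S₁.image (tf m), F τ
            = ∑ τ ∈ (S₁.image (tf m)).subtype
                (fun t => t ≠ 0 ∧ ∀ j, (|t j| : ℝ) ≤ 2 / δ j), F τ.1 := by
          rw [Finset.sum_subtype_eq_sum_filter, Finset.filter_true_of_mem hP]
        rw [heq, hXeq]
        exact Summable.of_finite.sum_le_tsum _ (fun t _ => hFnn _)
      have hcomp : ∑ σ ∈ S₁, F (tf m σ)
          = ∑ τ ∈ S₁.image (tf m), ((S₁.filter fun σ => tf m σ = τ).card) • F τ :=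
        Finset.sum_comp F (tf m)
      have hstep : ∑ σ ∈ S₁, F (tf m σ)
          ≤ (∏ j, ((N j : ℝ) + 1)) * ∑ τ ∈ S₁.image (tf m), F τ := by
        rw [hcomp, Finset.mul_sum]
        refine Finset.sum_le_sum fun τ _ => ?_
        rw [nsmul_eq_mul]
        refine mul_le_mul_of_nonneg_right ?_ (hFnn τ)
        refine le_trans ?_ (hD τ)
        have hsub : S₁.filter (fun σ => tf m σ = τ) ⊆ S.filter (fun σ => tf m σ = τ) :=
          Finset.filter_subset_filter _ (Finset.filter_subset _ _)
        exact_mod_cast Finset.card_le_card hsub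
      calc (∏ j, af N j) * ∑ σ ∈ S₁, F (tf m σ)
          ≤ (∏ j, af N j) * ((∏ j, ((N j : ℝ) + 1)) * ∑ τ ∈ S₁.image (tf m), F τ) :=
            mul_le_mul_of_nonneg_left hstep hafnn
        _ ≤ (∏ j, af N j) * ((∏ j, ((N j : ℝ) + 1)) * X) := by
            refine mul_le_mul_of_nonneg_left ?_ hafnn
            refine mul_le_mul_of_nonneg_left himg ?_
            exact Finset.prod_nonneg fun j _ => by positivity
        _ = (∏ j, af N j * ((N j : ℝ) + 1)) * X := by rw [hprodsplit]; ring
    calc ∑ σ ∈ S.filter (fun σ => tf m σ = 0), (∏ j, af N j) * F (tf m σ)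
          + ∑ σ ∈ S.filter (fun σ => ¬ tf m σ = 0), (∏ j, af N j) * F (tf m σ)
        ≤ (∏ j, af N j * ((N j : ℝ) + 1)) + (∏ j, af N j * ((N j : ℝ) + 1)) * X := by
          exact add_le_add hpart0 hpart1
      _ = (∏ j, af N j * ((N j : ℝ) + 1)) * (1 + X) := by ring
  -- product bound
  have hprodbd : ∏ j, af N j * ((N j : ℝ) + 1) ≤ 24 ^ m * ∏ j, δ j := by
    calc ∏ j, af N j * ((N j : ℝ) + 1) ≤ ∏ j, 24 * δ j :=
        Finset.prod_le_prod (fun j _ => mul_nonneg (af_pos N j).le (by positivity))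
          (fun j _ => haN j)
      _ = 24 ^ m * ∏ j, δ j := by
        rw [Finset.prod_mul_distrib, Finset.prod_const, Finset.card_univ, Fintype.card_fin]
  have hfinal : ∫ x, G x ∂μ ≤ 24 ^ m * (∏ j, δ j) * (1 + X) := by
    calc ∫ x, G x ∂μ ≤ (∏ j, af N j * ((N j : ℝ) + 1)) * (1 + X) := le_trans habs hsplit
      _ ≤ (24 ^ m * ∏ j, δ j) * (1 + X) :=
        mul_le_mul_of_nonneg_right hprodbd (by linarith)
      _ = 24 ^ m * (∏ j, δ j) * (1 + X) := by ring
  -- conclusion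
  calc μ (RsetC n m q δ)
      ≤ μ {x | (1 : ℝ≥0∞) ≤ ENNReal.ofReal (G x)} :=
        measure_mono (fun x hx => ENNReal.one_le_ofReal.mpr (hGone x hx))
    _ ≤ ∫⁻ x, ENNReal.ofReal (G x) ∂μ := by
        simpa using mul_meas_ge_le_lintegral₀
          ((ENNReal.measurable_ofReal.comp hGcont.measurable).aemeasurable) 1
    _ = ENNReal.ofReal (∫ x, G x ∂μ) :=
        (ofReal_integral_eq_lintegral_ofReal hGint (ae_of_all _ hGnn)).symm
    _ ≤ ENNReal.ofReal (24 ^ m * (∏ j, δ j) * (1 + X)) := ENNReal.ofReal_le_ofReal hfinal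

end
end
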